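/- arXiv:1607.06058 — 2 statements merged into one kernel-verified Lean document; each statement's English description precedes it below -/
import Mathlib

section
/- Fix an integer q ≥ 1, β > 0, and colors c_ℓ, c_r, c_i, c_f in {1,…,q}. Define the single-site update probability p(c | c_ℓ, c_r) = (w_β/2)·([c = c_ℓ] + [c = c_r]) + b_β · g_{c_ℓ,c_r}(c) + κ_β/q, where g_{c_ℓ,c_r}(c) = [c = c_ℓ] if c_ℓ = c_r, and g_{c_ℓ,c_r}(c) = 1/q if c_ℓ ≠ c_r, and w_β, b_β, κ_β are the Potts parameters. Then p(c_f | c_ℓ, c_r) · exp(−β·([c_i ≠ c_ℓ] + [c_i ≠ c_r])) = p(c_i | c_ℓ, c_r) · exp(−β·([c_f ≠ c_ℓ] + [c_f ≠ c_r])), i.e. the single-site dynamics satisfies detailed balance with respect to the Gibbs weights of the one-dimensional Potts Hamiltonian. -/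
open Real

/-- The walk probability of the stochastic Potts model. -/
noncomputable def pottsW (q : ℕ) (β : ℝ) : ℝ :=
  2 * (exp β - 1) / ((q : ℝ) + 2 * (exp β - 1))

/-- The branch probability of the stochastic Potts model. -/
noncomputable def pottsB (q : ℕ) (β : ℝ) : ℝ :=
  (exp β - 1) ^ 2 * (q : ℝ) / ((exp (2 * β) - 1 + (q : ℝ)) * ((q : ℝ) + 2 * (exp β - 1)))

/-- The kill probability of the stochastic Potts model. -/
noncomputable def pottsK (q : ℕ) (β : ℝ) : ℝ :=
  (q : ℝ) / (exp (2 * β) + (q : ℝ) - 1)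

/-- Single-site update probability of color `c` given neighbor colors `cl, cr`:
with probability `w_β` copy a uniformly chosen neighbor, with probability `b_β`
use the boundary nucleation distribution `g_{cl,cr}` (uniform on all `q` colors
if the neighbors disagree, the common color otherwise), with probability `κ_β`
pick a uniform color. -/
noncomputable def pottsUpdate (q : ℕ) (β : ℝ) (c cl cr : Fin q) : ℝ :=
  pottsW q β / 2 * ((if c = cl then (1 : ℝ) else 0) + (if c = cr then (1 : ℝ) else 0))
    + pottsB q β * (if cl = cr then (if c = cl then (1 : ℝ) else 0) else 1 / (q : ℝ))
    + pottsK q β / (q : ℝ)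


lemma pottsUpdate_eq (q : ℕ) (hq : 1 ≤ q) (β : ℝ) (hβ : 0 < β) (c cl cr : Fin q) :
    pottsUpdate q β c cl cr =
      (if cl = cr then pottsK q β / (q : ℝ) else (pottsB q β + pottsK q β) / (q : ℝ)) *
        exp (β * ((if c = cl then (1 : ℝ) else 0) + (if c = cr then (1 : ℝ) else 0))) := by
  have hs : (1 : ℝ) < exp β := by
    simpa using Real.exp_lt_exp.mpr hβ
  have h2 : exp (2 * β) = exp β * exp β := by
    rw [two_mul, Real.exp_add]
  have hqpos : (0 : ℝ) < (q : ℝ) := by exact_mod_cast hq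
  have hd1 : (q : ℝ) + 2 * (exp β - 1) ≠ 0 := by nlinarith
  have hd2 : exp β * exp β - 1 + (q : ℝ) ≠ 0 := by nlinarith
  have hd3 : exp β * exp β + (q : ℝ) - 1 ≠ 0 := by nlinarith
  have hq0 : (q : ℝ) ≠ 0 := ne_of_gt hqpos
  have hd4 : exp β ^ 2 - 1 + (q : ℝ) ≠ 0 := by nlinarith
  have hd5 : exp β ^ 2 + (q : ℝ) - 1 ≠ 0 := by nlinarith
  unfold pottsUpdate pottsW pottsB pottsK
  rw [h2]
  by_cases hlr : cl = cr
  · by_cases h1 : c = cl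
    · have h1' : c = cr := hlr ▸ h1
      simp only [hlr, h1, h1', if_pos rfl, if_pos]
      rw [show β * ((1:ℝ) + 1) = β + β by ring, Real.exp_add]
      field_simp
      ring
    · have h1' : c ≠ cr := hlr ▸ h1
      simp only [hlr, if_pos rfl, if_neg h1, if_neg h1']
      norm_num
  · by_cases h1 : c = cl
    · have h1' : c ≠ cr := fun h => hlr (h1 ▸ h)
      simp only [if_neg hlr, if_pos h1, if_neg h1']
      rw [show β * ((1:ℝ) + 0) = β by ring]
      field_simp
      ring
    · by_cases h2' : c = cr
      · simp only [if_neg hlr, if_neg h1, if_pos h2']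
        rw [show β * ((0:ℝ) + 1) = β by ring]
        field_simp
        ring
      · simp only [if_neg hlr, if_neg h1, if_neg h2']
        norm_num
        ring

/-- Detailed balance of the single-site Potts dynamics with respect to the
Gibbs weights of the one-dimensional Potts Hamiltonian. -/
theorem potts_detailed_balance (q : ℕ) (hq : 1 ≤ q) (β : ℝ) (hβ : 0 < β)
    (cl cr ci cf : Fin q) :
    pottsUpdate q β cf cl cr *
        exp (-β * ((if ci ≠ cl then (1 : ℝ) else 0) + (if ci ≠ cr then (1 : ℝ) else 0)))
      = pottsUpdate q β ci cl cr *
        exp (-β * ((if cf ≠ cl then (1 : ℝ) else 0) + (if cf ≠ cr then (1 : ℝ) else 0))) := by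
  have hne : ∀ a b : Fin q, (if a ≠ b then (1:ℝ) else 0) = 1 - (if a = b then 1 else 0) := by
    intro a b; by_cases h : a = b <;> simp [h]
  rw [pottsUpdate_eq q hq β hβ cf cl cr, pottsUpdate_eq q hq β hβ ci cl cr,
    hne, hne, hne, hne, mul_assoc, mul_assoc, ← Real.exp_add, ← Real.exp_add]
  congr 2
  ring
end

section
/- Let G = (V,E) be a finite rooted DAG in which every vertex has out-degree at most 2 and every non-leaf vertex has a path to a leaf. Call an intermediate vertex z (neither the root nor a leaf) 'relevant' if there exist two paths of G through z reaching leaves that do not meet strictly between z and the leaves, and 'irrelevant' otherwise. Let G̃ be the reduced graph whose vertex set Ṽ consists of the root, the leaves, and the relevant vertices, with a directed edge from z to z' in G̃ iff there is a path z = z₁, …, z_n = z' in G with z_i irrelevant for 1 < i < n. Then for any leaf coloring c₀ and any merge function F with F(v,c,c) = c, the unique coloring of G and the unique coloring of G̃ (using the same values F(v,·,·) at shared vertices) agree on every vertex of Ṽ. -/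
/-- Edge relation of a DAG whose out-neighbors are given by
`child : V → Option (V ⊕ V × V)`. -/
def childEdge {V : Type} (child : V → Option (V ⊕ V × V)) (v w : V) : Prop :=
  child v = some (Sum.inl w) ∨ (∃ w₂, child v = some (Sum.inr (w, w₂))) ∨
    (∃ w₁, child v = some (Sum.inr (w₁, w)))

/-- `p` is a path of the DAG starting at `z` and ending at a leaf. -/
def IsLeafPath {V : Type} (child : V → Option (V ⊕ V × V)) (z : V) (p : List V) : Prop :=
  p.head? = some z ∧ List.Chain' (childEdge child) p ∧
    ∃ l, p.getLast? = some l ∧ child l = none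

/-- An intermediate vertex `z` (neither the root `r` nor a leaf) is relevant if
two paths of the graph from `z` to the leaves do not meet strictly after `z`. -/
def Relevant {V : Type} (child : V → Option (V ⊕ V × V)) (r z : V) : Prop :=
  z ≠ r ∧ child z ≠ none ∧
    ∃ p q : List V, IsLeafPath child z p ∧ IsLeafPath child z q ∧
      ∀ v, v ∈ p.tail → v ∉ q.tail

/-- Vertices of the reduced graph: the root, the leaves, and the relevant
separation points. -/
def ReducedVertex {V : Type} (child : V → Option (V ⊕ V × V)) (r v : V) : Prop :=
  v = r ∨ child v = none ∨ Relevant child r v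

/-- `z'` is the reduced vertex reached from `w` by following a path all of
whose vertices before `z'` are irrelevant: this encodes the edges of the
reduced graph (`v` connects to `z'` in the reduced graph iff some child `w` of
`v` satisfies `ReachReduced child r w z'`). -/
def ReachReduced {V : Type} (child : V → Option (V ⊕ V × V)) (r w z' : V) : Prop :=
  ReducedVertex child r z' ∧
    ∃ p : List V, p.head? = some w ∧ p.getLast? = some z' ∧
      List.Chain' (childEdge child) p ∧ ∀ v ∈ p.dropLast, ¬ ReducedVertex child r v

namespace RGC
variable {V : Type} {child : V → Option (V ⊕ V × V)}

/-- paths from different children of the same vertex pairwise meet -/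
def Good (child : V → Option (V ⊕ V × V)) (a b : V) : Prop :=
  ∀ p q, IsLeafPath child a p → IsLeafPath child b q → ∃ u, u ∈ p ∧ u ∈ q

lemma leafPath_nonempty {z : V} {p : List V} (h : IsLeafPath child z p) : p ≠ [] := by
  intro he; rw [he] at h; simp [IsLeafPath] at h

lemma leafPath_head_mem {z : V} {p : List V} (h : IsLeafPath child z p) : z ∈ p := by
  obtain ⟨h1, -, -⟩ := h
  cases p with
  | nil => simp at h1
  | cons a t => simp at h1; simp [h1]

lemma leafPath_cons {v w : V} {p : List V} (he : childEdge child v w)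
    (h : IsLeafPath child w p) : IsLeafPath child v (v :: p) := by
  obtain ⟨h1, h2, l, h3, h4⟩ := h
  cases p with
  | nil => simp at h1
  | cons a t =>
    simp at h1; subst h1
    exact ⟨by simp, List.isChain_cons_cons.2 ⟨he, h2⟩, l, by rwa [List.getLast?_cons_cons], h4⟩

lemma leafPath_singleton {v : V} (h : child v = none) : IsLeafPath child v [v] :=
  ⟨rfl, List.isChain_singleton v, v, rfl, h⟩

/-- existence of a leaf path from every vertex -/
lemma leafPath_exists
    (hleaf : ∀ v, child v ≠ none →
      ∃ l, child l = none ∧ Relation.ReflTransGen (childEdge child) v l) :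
    ∀ v, ∃ p, IsLeafPath child v p := by
  intro v
  by_cases hv : child v = none
  · exact ⟨[v], leafPath_singleton hv⟩
  · obtain ⟨l, hl, hrt⟩ := hleaf v hv
    clear hv
    induction hrt using Relation.ReflTransGen.head_induction_on with
    | refl => exact ⟨[l], leafPath_singleton hl⟩
    | head e _ ih => obtain ⟨p, hp⟩ := ih; exact ⟨_ :: p, leafPath_cons e hp⟩

/-- a non-leaf vertex on a leaf path has a successor on the path -/
lemma leafPath_next {z a : V} {p : List V} (h : IsLeafPath child z p) (ha : a ∈ p)
    (hc : child a ≠ none) : ∃ b ∈ p, childEdge child a b := by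
  obtain ⟨-, h2, l, h3, h4⟩ := h
  clear z
  induction p with
  | nil => simp at ha
  | cons x t ih =>
    cases t with
    | nil =>
      simp at ha h3; subst ha; subst h3; exact absurd h4 hc
    | cons y s =>
      rcases List.mem_cons.1 ha with rfl | ha'
      · exact ⟨y, by simp, (List.isChain_cons_cons.1 h2).1⟩
      · obtain ⟨b, hb, he⟩ := ih ha' (List.isChain_cons_cons.1 h2).2
          (by rwa [List.getLast?_cons_cons] at h3)
        exact ⟨b, by simp [hb], he⟩

/-- membership in a path gives reachability from its head -/
lemma path_transGen {a : V} : ∀ {p : List V} {b : V}, p.head? = some b →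
    List.Chain' (childEdge child) p → a ∈ p → a = b ∨
      Relation.TransGen (childEdge child) b a := by
  intro p
  induction p with
  | nil => intro b h; simp at h
  | cons x t ih =>
    intro b h hc ha
    simp at h; subst h
    rcases List.mem_cons.1 ha with rfl | ha'
    · exact Or.inl rfl
    · cases t with
      | nil => simp at ha'
      | cons y s =>
        rcases ih rfl (List.isChain_cons_cons.1 hc).2 ha' with rfl | ht
        · exact Or.inr (Relation.TransGen.single (List.isChain_cons_cons.1 hc).1)
        · exact Or.inr (Relation.TransGen.head (List.isChain_cons_cons.1 hc).1 ht)

lemma path_reflTransGen : ∀ {p : List V} {b z : V}, p.head? = some b →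
    p.getLast? = some z → List.Chain' (childEdge child) p →
    Relation.ReflTransGen (childEdge child) b z := by
  intro p
  induction p with
  | nil => intro b z h; simp at h
  | cons x t ih =>
    intro b z h hl hc
    simp at h; subst h
    cases t with
    | nil => simp at hl; subst hl; rfl
    | cons y s =>
      rw [List.getLast?_cons_cons] at hl
      exact Relation.ReflTransGen.head (List.isChain_cons_cons.1 hc).1
        (ih rfl hl (List.isChain_cons_cons.1 hc).2)

lemma edge_inl {v w x : V} (h : child v = some (Sum.inl x)) (he : childEdge child v w) :
    w = x := by
  rcases he with h1 | ⟨w₂, h2⟩ | ⟨w₁, h2⟩ <;> rw [h] at * <;> simp_all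

lemma edge_inr {v w x₁ x₂ : V} (h : child v = some (Sum.inr (x₁, x₂)))
    (he : childEdge child v w) : w = x₁ ∨ w = x₂ := by
  rcases he with h1 | ⟨w₂, h2⟩ | ⟨w₁, h2⟩ <;> rw [h] at * <;> simp_all

end RGC

namespace RGC
variable {V C : Type} [Fintype V] {child : V → Option (V ⊕ V × V)}

lemma wf_desc (hacyc : ∀ v, ¬ Relation.TransGen (childEdge child) v v) :
    WellFounded (fun x y : V => Relation.TransGen (childEdge child) y x) := by
  haveI : IsTrans V (fun x y : V => Relation.TransGen (childEdge child) y x) :=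
    ⟨fun a b c h1 h2 => h2.trans h1⟩
  haveI : IsIrrefl V (fun x y : V => Relation.TransGen (childEdge child) y x) :=
    ⟨fun a => hacyc a⟩
  exact Finite.wellFounded_of_trans_of_irrefl _

section Theta
variable (hacyc : ∀ v, ¬ Relation.TransGen (childEdge child) v v)
  {F : V → C → C → C} (hF : ∀ v c, F v c c = c) {θ : V → C}
  (hθ2 : ∀ v w, child v = some (Sum.inl w) → θ v = θ w)
  (hθ3 : ∀ v w₁ w₂, child v = some (Sum.inr (w₁, w₂)) → θ v = F v (θ w₁) (θ w₂))

include hacyc hF hθ2 hθ3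

/-- Lemma P: a common vertex of all leaf paths from `a` has the same color. -/
lemma lemP : ∀ a z : V, (∀ p, IsLeafPath child a p → z ∈ p) → θ a = θ z := by
  intro a
  induction a using (wf_desc hacyc).induction with
  | _ a ih =>
    intro z hz
    by_cases haz : a = z
    · rw [haz]
    have key : ∀ x' : V, childEdge child a x' → θ x' = θ z := by
      intro x' he
      refine ih x' (Relation.TransGen.single he) z ?_
      intro p hp
      have := hz (a :: p) (leafPath_cons he hp)
      rcases List.mem_cons.1 this with rfl | h
      · exact absurd rfl haz
      · exact h
    rcases hca : child a with - | x | ⟨x₁, x₂⟩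
    · have := hz [a] (leafPath_singleton hca)
      simp at this; exact absurd this.symm haz
    · rw [hθ2 a x hca, key x (Or.inl hca)]
    · rw [hθ3 a x₁ x₂ hca, key x₁ (Or.inr (Or.inl ⟨x₂, hca⟩)),
        key x₂ (Or.inr (Or.inr ⟨x₁, hca⟩)), hF]

/-- Lemma M: if all leaf paths from `a` meet all leaf paths from `b`,
then `a` and `b` have the same color. -/
lemma lemM : ∀ a b : V, Good child a b → θ a = θ b := by
  intro a
  induction a using (wf_desc hacyc).induction with
  | _ a iha =>
    intro b
    induction b using (wf_desc hacyc).induction with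
    | _ b ihb =>
      intro hg
      by_cases hab : a = b
      · rw [hab]
      by_cases h1 : ∀ p, IsLeafPath child a p → b ∈ p
      · exact lemP hacyc hF hθ2 hθ3 a b h1
      by_cases h2 : ∀ q, IsLeafPath child b q → a ∈ q
      · exact (lemP hacyc hF hθ2 hθ3 b a h2).symm
      push_neg at h1 h2
      obtain ⟨p₀, hp₀, hbp₀⟩ := h1
      obtain ⟨q₀, hq₀, haq₀⟩ := h2
      -- a and b are not leaves
      have hca : child a ≠ none := by
        intro h
        obtain ⟨u, hu1, hu2⟩ := hg [a] q₀ (leafPath_singleton h) hq₀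
        simp at hu1; subst hu1; exact haq₀ hu2
      have hcb : child b ≠ none := by
        intro h
        obtain ⟨u, hu1, hu2⟩ := hg p₀ [b] hp₀ (leafPath_singleton h)
        simp at hu2; subst hu2; exact hbp₀ hu1
      -- key: failure of Good at a child gives reachability
      have failA : ∀ x : V, childEdge child a x → ¬ Good child x b →
          Relation.TransGen (childEdge child) b a := by
        intro x he hng
        simp only [Good, not_forall] at hng
        obtain ⟨p, q, hp, hq, hnu⟩ := hng
        push_neg at hnu
        obtain ⟨u, hu1, hu2⟩ := hg (a :: p) q (leafPath_cons he hp) hq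
        rcases List.mem_cons.1 hu1 with rfl | hu1'
        · rcases path_transGen hq.1 hq.2.1 hu2 with rfl | ht
          · exact absurd rfl hab
          · exact ht
        · exact absurd hu2 (by intro h; exact (hnu u hu1' h))
      have failB : ∀ y : V, childEdge child b y → ¬ Good child a y →
          Relation.TransGen (childEdge child) a b := by
        intro y he hng
        simp only [Good, not_forall] at hng
        obtain ⟨p, q, hp, hq, hnu⟩ := hng
        push_neg at hnu
        obtain ⟨u, hu1, hu2⟩ := hg p (b :: q) hp (leafPath_cons he hq)
        rcases List.mem_cons.1 hu2 with rfl | hu2'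
        · rcases path_transGen hp.1 hp.2.1 hu1 with rfl | ht
          · exact absurd rfl (Ne.symm hab)
          · exact ht
        · exact absurd hu1 (by intro h; exact (hnu u h hu2'))
      -- single-child descent for a
      rcases hcav : child a with - | x | ⟨x₁, x₂⟩
      · exact absurd hcav hca
      · -- child a = inl x : Good x b holds
        have hgx : Good child x b := by
          intro p q hp hq
          obtain ⟨u, hu1, hu2⟩ := hg (a :: p) q (leafPath_cons (Or.inl hcav) hp) hq
          rcases List.mem_cons.1 hu1 with rfl | hu1'
          · -- u = a ∈ q, a not a leaf: successor x ∈ q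
            obtain ⟨b', hb', he'⟩ := leafPath_next hq hu2 hca
            rw [edge_inl hcav he'] at hb'
            exact ⟨x, leafPath_head_mem hp, hb'⟩
          · exact ⟨u, hu1', hu2⟩
        rw [hθ2 a x hcav, iha x (Relation.TransGen.single (Or.inl hcav)) b hgx]
      · rcases hcbv : child b with - | y | ⟨y₁, y₂⟩
        · exact absurd hcbv hcb
        · -- child b = inl y : Good a y holds
          have hgy : Good child a y := by
            intro p q hp hq
            obtain ⟨u, hu1, hu2⟩ := hg p (b :: q) hp (leafPath_cons (Or.inl hcbv) hq)
            rcases List.mem_cons.1 hu2 with rfl | hu2'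
            · obtain ⟨a', ha', he'⟩ := leafPath_next hp hu1 hcb
              rw [edge_inl hcbv he'] at ha'
              exact ⟨y, ha', leafPath_head_mem hq⟩
            · exact ⟨u, hu1, hu2'⟩
          rw [hθ2 b y hcbv, ihb y (Relation.TransGen.single (Or.inl hcbv)) hgy]
        · -- both have two children
          by_cases hx : Good child x₁ b ∧ Good child x₂ b
          · rw [hθ3 a x₁ x₂ hcav,
              iha x₁ (Relation.TransGen.single (Or.inr (Or.inl ⟨x₂, hcav⟩))) b hx.1,
              iha x₂ (Relation.TransGen.single (Or.inr (Or.inr ⟨x₁, hcav⟩))) b hx.2, hF]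
          · have hy : Good child a y₁ ∧ Good child a y₂ := by
              by_contra hy
              have hba : Relation.TransGen (childEdge child) b a := by
                rcases not_and_or.1 hx with h | h
                · exact failA x₁ (Or.inr (Or.inl ⟨x₂, hcav⟩)) h
                · exact failA x₂ (Or.inr (Or.inr ⟨x₁, hcav⟩)) h
              have hab' : Relation.TransGen (childEdge child) a b := by
                rcases not_and_or.1 hy with h | h
                · exact failB y₁ (Or.inr (Or.inl ⟨y₂, hcbv⟩)) h
                · exact failB y₂ (Or.inr (Or.inr ⟨y₁, hcbv⟩)) h
              exact hacyc a (hab'.trans hba)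
            rw [hθ3 b y₁ y₂ hcbv,
              ← ihb y₁ (Relation.TransGen.single (Or.inr (Or.inl ⟨y₂, hcbv⟩))) hy.1,
              ← ihb y₂ (Relation.TransGen.single (Or.inr (Or.inr ⟨y₁, hcbv⟩))) hy.2, hF]
end Theta
end RGC

namespace RGC
section Main
variable {V C : Type} [Fintype V] {child : V → Option (V ⊕ V × V)} {r : V}
  (hacyc : ∀ v, ¬ Relation.TransGen (childEdge child) v v)
  {F : V → C → C → C} (hF : ∀ v c, F v c c = c) {θ : V → C}
  (hθ2 : ∀ v w, child v = some (Sum.inl w) → θ v = θ w)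
  (hθ3 : ∀ v w₁ w₂, child v = some (Sum.inr (w₁, w₂)) → θ v = F v (θ w₁) (θ w₂))

include hacyc hF hθ2 hθ3

/-- along a path of irrelevant vertices the color does not change -/
lemma lemL : ∀ (p : List V) (w z' : V), p.head? = some w → p.getLast? = some z' →
    List.Chain' (childEdge child) p → (∀ v ∈ p.dropLast, ¬ ReducedVertex child r v) →
    θ w = θ z' := by
  intro p
  induction p with
  | nil => intro w z' h; simp at h
  | cons x t ih =>
    intro w z' hh hl hc hirr
    simp at hh; subst hh
    cases t with
    | nil => simp at hl; subst hl; rfl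
    | cons y s =>
      have hwirr : ¬ ReducedVertex child r x := hirr x (by simp)
      simp only [ReducedVertex, not_or] at hwirr
      obtain ⟨hwr, hwc, hwrel⟩ := hwirr
      have he : childEdge child x y := (List.isChain_cons_cons.1 hc).1
      have hrest : θ y = θ z' := by
        refine ih y z' rfl (by rwa [List.getLast?_cons_cons] at hl)
          (List.isChain_cons_cons.1 hc).2 ?_
        intro v hv
        exact hirr v (List.mem_cons_of_mem _ hv)
      rcases hcw : child x with - | c | ⟨c₁, c₂⟩
      · exact absurd hcw hwc
      · rw [hθ2 x c hcw, ← edge_inl hcw he, hrest]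
      · -- w is irrelevant with two children : its children satisfy Good
        have hgood : Good child c₁ c₂ := by
          intro p q hp hq
          simp only [Relevant, not_and, not_exists] at hwrel
          have := hwrel hwr hwc (x :: p) (x :: q)
          simp only [not_and, not_forall] at this
          obtain ⟨u, hu1, hu2⟩ := this (leafPath_cons (Or.inr (Or.inl ⟨c₂, hcw⟩)) hp)
            (leafPath_cons (Or.inr (Or.inr ⟨c₁, hcw⟩)) hq)
          simp only [List.tail_cons] at hu1 hu2
          exact ⟨u, hu1, not_not.1 hu2⟩
        have h12 : θ c₁ = θ c₂ := lemM hacyc hF hθ2 hθ3 c₁ c₂ hgood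
        have hw1 : θ x = θ c₁ := by rw [hθ3 x c₁ c₂ hcw, ← h12, hF]
        rcases edge_inr hcw he with rfl | rfl
        · rw [hw1, hrest]
        · rw [hw1, h12, hrest]

omit hF hθ2 hθ3 in
/-- existence of a reduced vertex reached from any vertex -/
lemma reach_exists : ∀ w : V, ∃ z', ReachReduced child r w z' := by
  intro w
  induction w using (wf_desc hacyc).induction with
  | _ w ih =>
    by_cases hw : ReducedVertex child r w
    · exact ⟨w, hw, [w], rfl, rfl, List.isChain_singleton w, by simp⟩
    · have hwc : child w ≠ none := fun h => hw (Or.inr (Or.inl h))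
      have hex : ∃ x, childEdge child w x := by
        rcases hcw : child w with - | x | ⟨x₁, x₂⟩
        · exact absurd hcw hwc
        · exact ⟨x, Or.inl hcw⟩
        · exact ⟨x₁, Or.inr (Or.inl ⟨x₂, hcw⟩)⟩
      obtain ⟨x, he⟩ := hex
      obtain ⟨z', hz', p, hh, hl, hc, hirr⟩ := ih x (Relation.TransGen.single he)
      cases p with
      | nil => simp at hh
      | cons a s =>
        simp at hh; subst hh
        refine ⟨z', hz', w :: a :: s, by simp, by rwa [List.getLast?_cons_cons],
          List.isChain_cons_cons.2 ⟨he, hc⟩, ?_⟩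
        intro v hv
        rcases List.mem_cons.1 hv with rfl | hv'
        · exact hw
        · exact hirr v hv'

end Main
end RGC


/-- Proposition 1.4: the coloring algorithm applied to a finite rooted DAG and
to its reduced graph (skipping all irrelevant vertices) induce the same
coloring on the vertices of the reduced graph. -/
theorem reduced_graph_coloring {V C : Type} [Fintype V]
    (child : V → Option (V ⊕ V × V)) (r : V)
    (hacyc : ∀ v, ¬ Relation.TransGen (childEdge child) v v)
    (hleaf : ∀ v, child v ≠ none →
      ∃ l, child l = none ∧ Relation.ReflTransGen (childEdge child) v l)
    (c₀ : V → C) (F : V → C → C → C) (hF : ∀ v c, F v c c = c)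
    (θ θr : V → C)
    (hθ1 : ∀ v, child v = none → θ v = c₀ v)
    (hθ2 : ∀ v w, child v = some (Sum.inl w) → θ v = θ w)
    (hθ3 : ∀ v w₁ w₂, child v = some (Sum.inr (w₁, w₂)) → θ v = F v (θ w₁) (θ w₂))
    (hr1 : ∀ v, child v = none → θr v = c₀ v)
    (hr2 : ∀ v w z', ReducedVertex child r v → child v = some (Sum.inl w) →
      ReachReduced child r w z' → θr v = θr z')
    (hr3 : ∀ v w₁ w₂ z₁ z₂, ReducedVertex child r v → child v = some (Sum.inr (w₁, w₂)) →
      ReachReduced child r w₁ z₁ → ReachReduced child r w₂ z₂ →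
      θr v = F v (θr z₁) (θr z₂)) :
    ∀ v, ReducedVertex child r v → θr v = θ v := by
  intro v
  induction v using (RGC.wf_desc hacyc).induction with
  | _ v ih =>
    intro hv
    have step : ∀ w z', childEdge child v w → ReachReduced child r w z' →
        Relation.TransGen (childEdge child) v z' ∧ θr z' = θ z' ∧ θ w = θ z' := by
      intro w z' he hz'
      obtain ⟨hzr, p, hh, hl, hc, hirr⟩ := hz'
      have hvz : Relation.TransGen (childEdge child) v z' :=
        Relation.TransGen.head' he (RGC.path_reflTransGen hh hl hc)
      exact ⟨hvz, ih z' hvz hzr, RGC.lemL hacyc hF hθ2 hθ3 p w z' hh hl hc hirr⟩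
    rcases hcv : child v with - | w | ⟨w₁, w₂⟩
    · rw [hr1 v hcv, hθ1 v hcv]
    · obtain ⟨z', hz'⟩ := RGC.reach_exists hacyc w
      obtain ⟨-, h1, h2⟩ := step w z' (Or.inl hcv) hz'
      rw [hr2 v w z' hv hcv hz', h1, ← h2, hθ2 v w hcv]
    · obtain ⟨z₁, hz₁⟩ := RGC.reach_exists hacyc w₁
      obtain ⟨z₂, hz₂⟩ := RGC.reach_exists hacyc w₂
      obtain ⟨-, h1, h2⟩ := step w₁ z₁ (Or.inr (Or.inl ⟨w₂, hcv⟩)) hz₁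
      obtain ⟨-, h3, h4⟩ := step w₂ z₂ (Or.inr (Or.inr ⟨w₁, hcv⟩)) hz₂
      rw [hr3 v w₁ w₂ z₁ z₂ hv hcv hz₁ hz₂, h1, h3, ← h2, ← h4, hθ3 v w₁ w₂ hcv]
end
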